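/- Let n ≥ 1, let p, q ≤ n, and let a ∈ M_{p×q}(ℕ) be a matrix of exponents. If I_n(a) ≠ 0, then the matrix a is admissible, i.e. the sum of the entries on each of its rows and on each of its columns is an even number. -/

import Mathlib

open MeasureTheory Matrix

noncomputable section

/-- The double factorial convention of the paper: `m!! = (m-1)(m-3)(m-5)⋯`,
the product ending at `1` or `2` (empty product being `1`), i.e. the standard
double factorial of `m - 1`. -/
def df (m : ℕ) : ℕ := Nat.doubleFactorial (m - 1)

/-- The Borel σ-algebra on the orthogonal group `O_n`. -/
instance (n : ℕ) : MeasurableSpace (Matrix.orthogonalGroup (Fin n) ℝ) := borel _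

instance (n : ℕ) : BorelSpace (Matrix.orthogonalGroup (Fin n) ℝ) := ⟨rfl⟩

/-- The `(i,j)` entry of an orthogonal matrix (out-of-range indices give `0`;
in all statements below the indices are in range). -/
def entry {n : ℕ} (u : Matrix.orthogonalGroup (Fin n) ℝ) (i j : ℕ) : ℝ :=
  if h : i < n ∧ j < n then (u : Matrix (Fin n) (Fin n) ℝ) ⟨i, h.1⟩ ⟨j, h.2⟩ else 0

/-- The rectangular integral `I_n(a) = ∫_{O_n} ∏_{i,j} u_{ij}^{a_{ij}} du`. -/
def In (n : ℕ) {p q : ℕ} (μ : Measure (Matrix.orthogonalGroup (Fin n) ℝ))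
    (a : Matrix (Fin p) (Fin q) ℕ) : ℝ :=
  ∫ u, ∏ i : Fin p, ∏ j : Fin q, entry u i j ^ a i j ∂μ

/-- The two-row integral `I_n(a;b) = ∫_{O_n} ∏_j u_{1j}^{a_j} u_{2j}^{b_j} du`. -/
def twoRowI (n : ℕ) {q : ℕ} (μ : Measure (Matrix.orthogonalGroup (Fin n) ℝ))
    (a b : Fin q → ℕ) : ℝ :=
  ∫ u, ∏ j : Fin q, entry u 0 j ^ a j * entry u 1 j ^ b j ∂μ

/-- The normalized two-row quantity
`Φ_n(a;b) = (Σa+n-2)!!(Σb+n-2)!! / (((n-2)!!)² ∏ a_i!! ∏ b_i!!) · I_n(a;b)`. -/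
def Phi (n : ℕ) {q : ℕ} (μ : Measure (Matrix.orthogonalGroup (Fin n) ℝ))
    (a b : Fin q → ℕ) : ℝ :=
  ((df (∑ i, a i + n - 2) : ℝ) * (df (∑ i, b i + n - 2) : ℝ)) /
    ((df (n - 2) : ℝ) ^ 2 * (∏ i, (df (a i) : ℝ)) * ∏ i, (df (b i) : ℝ)) *
    twoRowI n μ a b

/-- The pair of rows `E(r,s,t)`: top row `(1^{2r}, 2^s, 0^t)`. -/
def Etop (r s t : ℕ) : Fin (2 * r + s + t) → ℕ :=
  fun j => if (j : ℕ) < 2 * r then 1 else if (j : ℕ) < 2 * r + s then 2 else 0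

/-- The pair of rows `E(r,s,t)`: bottom row `(1^{2r}, 0^s, 2^t)`. -/
def Ebot (r s t : ℕ) : Fin (2 * r + s + t) → ℕ :=
  fun j => if (j : ℕ) < 2 * r then 1 else if (j : ℕ) < 2 * r + s then 0 else 2



section Aux

open scoped ENNReal NNReal

instance (n : ℕ) : IsTopologicalGroup (Matrix.orthogonalGroup (Fin n) ℝ) where
  continuous_mul := by
    apply continuous_induced_rng.mpr
    exact (continuous_subtype_val.comp continuous_fst).mul
      (continuous_subtype_val.comp continuous_snd)
  continuous_inv := by
    apply continuous_induced_rng.mpr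
    have h : (fun u : Matrix.orthogonalGroup (Fin n) ℝ =>
        ((u⁻¹ : Matrix.orthogonalGroup (Fin n) ℝ) : Matrix (Fin n) (Fin n) ℝ))
        = fun u : Matrix.orthogonalGroup (Fin n) ℝ =>
          star (u : Matrix (Fin n) (Fin n) ℝ) := rfl
    show Continuous fun u : Matrix.orthogonalGroup (Fin n) ℝ =>
      ((u⁻¹ : Matrix.orthogonalGroup (Fin n) ℝ) : Matrix (Fin n) (Fin n) ℝ)
    rw [h]
    exact continuous_star.comp continuous_subtype_val

set_option maxHeartbeats 1000000 in
lemma orth_isCompact (n : ℕ) :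
    IsCompact ((Matrix.orthogonalGroup (Fin n) ℝ) : Set (Matrix (Fin n) (Fin n) ℝ)) := by
  have hsub : ((Matrix.orthogonalGroup (Fin n) ℝ) : Set (Matrix (Fin n) (Fin n) ℝ)) ⊆
      Set.univ.pi fun _ : Fin n => Set.univ.pi fun _ : Fin n => Set.Icc (-1:ℝ) 1 := by
    intro A hA
    refine Set.mem_univ_pi.mpr ?_
    intro i
    rw [Set.mem_univ_pi]
    intro j
    have hmem : A * star A = 1 := (Unitary.mem_iff.mp hA).2
    have hrow : ∑ k, A i k * A i k = 1 := by
      have := congrArg (fun M => M i i) hmem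
      simpa [Matrix.mul_apply, Matrix.one_apply, Matrix.star_eq_conjTranspose,
        Matrix.conjTranspose_apply] using this
    have hsq : A i j ^ 2 ≤ 1 := by
      have h1 : A i j ^ 2 ≤ ∑ k, A i k ^ 2 :=
        Finset.single_le_sum (f := fun k => A i k ^ 2) (fun k _ => sq_nonneg _)
          (Finset.mem_univ j)
      have h2 : ∑ k, A i k ^ 2 = 1 := by simpa [sq] using hrow
      linarith
    exact abs_le.mp ((sq_le_one_iff_abs_le_one _).mp hsq)
  have hK : IsCompact (Set.univ.pi fun _ : Fin n =>
      Set.univ.pi fun _ : Fin n => Set.Icc (-1:ℝ) 1) :=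
    isCompact_univ_pi fun _ => isCompact_univ_pi fun _ => isCompact_Icc
  have hclosed : IsClosed ((Matrix.orthogonalGroup (Fin n) ℝ) : Set (Matrix (Fin n) (Fin n) ℝ)) := by
    have heq : ((Matrix.orthogonalGroup (Fin n) ℝ) : Set (Matrix (Fin n) (Fin n) ℝ)) =
        (fun A : Matrix (Fin n) (Fin n) ℝ => (star A * A, A * star A)) ⁻¹'
          {((1 : Matrix (Fin n) (Fin n) ℝ), (1 : Matrix (Fin n) (Fin n) ℝ))} := by
      ext A
      constructor
      · intro hA
        have h := Unitary.mem_iff.mp hA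
        simp [Set.mem_preimage, Prod.ext_iff, h.1, h.2]
      · intro hA
        simp only [Set.mem_preimage, Set.mem_singleton_iff, Prod.ext_iff] at hA
        exact Unitary.mem_iff.mpr ⟨hA.1, hA.2⟩
    rw [heq]
    apply IsClosed.preimage
    · exact (continuous_star.mul continuous_id).prodMk (continuous_id.mul continuous_star)
    · exact isClosed_singleton
  exact hK.of_isClosed_subset hclosed hsub

instance (n : ℕ) : CompactSpace (Matrix.orthogonalGroup (Fin n) ℝ) :=
  isCompact_iff_compactSpace.mp (orth_isCompact n)

set_option synthInstance.maxHeartbeats 1000000 in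
set_option maxHeartbeats 1000000 in
lemma haar_isMulRightInvariant (n : ℕ)
    (μ : Measure (Matrix.orthogonalGroup (Fin n) ℝ))
    [μ.IsHaarMeasure] [IsProbabilityMeasure μ] : μ.IsMulRightInvariant := by
  constructor
  intro g
  set ν := Measure.map (· * g) μ with hν
  have hmg : Measurable (· * g) := measurable_mul_const g
  have hν_prob : IsProbabilityMeasure ν := Measure.isProbabilityMeasure_map hmg.aemeasurable
  have hν_left : ν.IsMulLeftInvariant := by
    constructor
    intro h
    rw [hν, Measure.map_map (measurable_const_mul h) hmg]
    have hcomp : ((h * ·) ∘ (· * g)) = ((· * g) ∘ (h * ·)) := by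
      ext x; simp [Function.comp, mul_assoc]
    rw [hcomp, ← Measure.map_map hmg (measurable_const_mul h),
      MeasureTheory.map_mul_left_eq_self μ h]
  have heq : ν = Measure.haarScalarFactor ν μ • μ :=
    MeasureTheory.Measure.isMulInvariant_eq_smul_of_compactSpace ν μ
  have huniv : (1 : ℝ≥0∞) = (Measure.haarScalarFactor ν μ : ℝ≥0∞) * 1 := by
    have := congrArg (fun m : Measure _ => m Set.univ) heq
    simpa only [Measure.smul_apply, measure_univ, ENNReal.smul_def, smul_eq_mul] using this
  have hc' : Measure.haarScalarFactor ν μ = 1 := by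
    rw [mul_one] at huniv
    exact_mod_cast huniv.symm
  rw [heq, hc', one_smul]

lemma diag_mem {n : ℕ} (d : Fin n → ℝ) (hd : ∀ k, d k * d k = 1) :
    Matrix.diagonal d ∈ Matrix.orthogonalGroup (Fin n) ℝ := by
  rw [Matrix.mem_orthogonalGroup_iff]
  rw [Matrix.diagonal_transpose]
  have hsd : star d = d := by funext k; simp
  rw [Matrix.diagonal_mul_diagonal]
  have h1 : (fun k => d k * d k) = fun _ => (1:ℝ) := funext hd
  rw [h1]
  exact Matrix.diagonal_one

end Aux

/-- if `I_n(a) ≠ 0` then `a` is admissible. -/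
theorem statement2 (n p q : ℕ) (hn : 1 ≤ n) (hp : p ≤ n) (hq : q ≤ n)
    (a : Matrix (Fin p) (Fin q) ℕ)
    (μ : Measure (Matrix.orthogonalGroup (Fin n) ℝ))
    [μ.IsHaarMeasure] [IsProbabilityMeasure μ]
    (h : In n μ a ≠ 0) :
    (∀ i, Even (∑ j, a i j)) ∧ (∀ j, Even (∑ i, a i j)) := by
  classical
  have hrinv : μ.IsMulRightInvariant := haar_isMulRightInvariant n μ
  constructor
  · -- rows
    intro i
    by_contra hodd
    apply h
    have hoddi : Odd (∑ j, a i j) := Nat.not_even_iff_odd.mp hodd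
    set d : Fin n → ℝ := fun k => if k = Fin.castLE hp i then -1 else 1 with hd
    have hdmem : Matrix.diagonal d ∈ Matrix.orthogonalGroup (Fin n) ℝ := by
      apply diag_mem
      intro k
      by_cases hk : k = Fin.castLE hp i <;> simp [hd, hk]
    set g : Matrix.orthogonalGroup (Fin n) ℝ := ⟨Matrix.diagonal d, hdmem⟩ with hg
    have hent : ∀ (u : Matrix.orthogonalGroup (Fin n) ℝ) (i0 : Fin p) (j : Fin q),
        entry (g * u) i0 j = d (Fin.castLE hp i0) * entry u i0 j := by
      intro u i0 j
      have h1 : (i0:ℕ) < n := lt_of_lt_of_le i0.isLt hp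
      have h2 : (j:ℕ) < n := lt_of_lt_of_le j.isLt hq
      simp only [entry, dif_pos (show (i0:ℕ) < n ∧ (j:ℕ) < n from ⟨h1, h2⟩)]
      have hcoe : ((g * u : Matrix.orthogonalGroup (Fin n) ℝ) : Matrix (Fin n) (Fin n) ℝ)
          = Matrix.diagonal d * (u : Matrix (Fin n) (Fin n) ℝ) := rfl
      rw [hcoe, Matrix.diagonal_mul]
      rfl
    have key : ∀ u : Matrix.orthogonalGroup (Fin n) ℝ,
        (∏ i0 : Fin p, ∏ j : Fin q, entry (g * u) i0 j ^ a i0 j)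
          = - ∏ i0 : Fin p, ∏ j : Fin q, entry u i0 j ^ a i0 j := by
      intro u
      have : (∏ i0 : Fin p, ∏ j : Fin q, entry (g * u) i0 j ^ a i0 j)
          = (∏ i0 : Fin p, d (Fin.castLE hp i0) ^ (∑ j, a i0 j)) *
            ∏ i0 : Fin p, ∏ j : Fin q, entry u i0 j ^ a i0 j := by
        rw [← Finset.prod_mul_distrib]
        refine Finset.prod_congr rfl fun i0 _ => ?_
        rw [← Finset.prod_pow_eq_pow_sum, ← Finset.prod_mul_distrib]
        refine Finset.prod_congr rfl fun j _ => ?_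
        rw [hent u i0 j, mul_pow]
      rw [this]
      have hsign : (∏ i0 : Fin p, d (Fin.castLE hp i0) ^ (∑ j, a i0 j)) = -1 := by
        rw [Finset.prod_eq_single i]
        · simp only [hd, if_pos rfl]
          exact hoddi.neg_one_pow
        · intro i0 _ hne
          have : Fin.castLE hp i0 ≠ Fin.castLE hp i := by
            intro hc
            exact hne (Fin.castLE_injective hp hc)
          simp [hd, this]
        · intro hmem; exact absurd (Finset.mem_univ i) hmem
      rw [hsign, neg_one_mul]
    have hint : In n μ a = - In n μ a := by
      unfold In
      conv_lhs => rw [← integral_mul_left_eq_self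
        (fun u => ∏ i0 : Fin p, ∏ j : Fin q, entry u i0 j ^ a i0 j) g]
      rw [show (fun u => ∏ i0 : Fin p, ∏ j : Fin q, entry (g * u) i0 j ^ a i0 j)
          = fun u => - ∏ i0 : Fin p, ∏ j : Fin q, entry u i0 j ^ a i0 j from funext key]
      rw [integral_neg]
    unfold In at hint ⊢
    linarith
  · -- columns
    intro j
    by_contra hodd
    apply h
    have hoddj : Odd (∑ i, a i j) := Nat.not_even_iff_odd.mp hodd
    set d : Fin n → ℝ := fun k => if k = Fin.castLE hq j then -1 else 1 with hd
    have hdmem : Matrix.diagonal d ∈ Matrix.orthogonalGroup (Fin n) ℝ := by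
      apply diag_mem
      intro k
      by_cases hk : k = Fin.castLE hq j <;> simp [hd, hk]
    set g : Matrix.orthogonalGroup (Fin n) ℝ := ⟨Matrix.diagonal d, hdmem⟩ with hg
    have hent : ∀ (u : Matrix.orthogonalGroup (Fin n) ℝ) (i0 : Fin p) (j0 : Fin q),
        entry (u * g) i0 j0 = entry u i0 j0 * d (Fin.castLE hq j0) := by
      intro u i0 j0
      have h1 : (i0:ℕ) < n := lt_of_lt_of_le i0.isLt hp
      have h2 : (j0:ℕ) < n := lt_of_lt_of_le j0.isLt hq
      simp only [entry, dif_pos (show (i0:ℕ) < n ∧ (j0:ℕ) < n from ⟨h1, h2⟩)]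
      have hcoe : ((u * g : Matrix.orthogonalGroup (Fin n) ℝ) : Matrix (Fin n) (Fin n) ℝ)
          = (u : Matrix (Fin n) (Fin n) ℝ) * Matrix.diagonal d := rfl
      rw [hcoe, Matrix.mul_diagonal]
      rfl
    have key : ∀ u : Matrix.orthogonalGroup (Fin n) ℝ,
        (∏ i0 : Fin p, ∏ j0 : Fin q, entry (u * g) i0 j0 ^ a i0 j0)
          = - ∏ i0 : Fin p, ∏ j0 : Fin q, entry u i0 j0 ^ a i0 j0 := by
      intro u
      have hswap : ∀ v : Matrix.orthogonalGroup (Fin n) ℝ,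
          (∏ i0 : Fin p, ∏ j0 : Fin q, entry v i0 j0 ^ a i0 j0)
            = ∏ j0 : Fin q, ∏ i0 : Fin p, entry v i0 j0 ^ a i0 j0 := by
        intro v; rw [Finset.prod_comm]
      rw [hswap (u * g), hswap u]
      have : (∏ j0 : Fin q, ∏ i0 : Fin p, entry (u * g) i0 j0 ^ a i0 j0)
          = (∏ j0 : Fin q, d (Fin.castLE hq j0) ^ (∑ i0, a i0 j0)) *
            ∏ j0 : Fin q, ∏ i0 : Fin p, entry u i0 j0 ^ a i0 j0 := by
        rw [← Finset.prod_mul_distrib]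
        refine Finset.prod_congr rfl fun j0 _ => ?_
        rw [← Finset.prod_pow_eq_pow_sum, ← Finset.prod_mul_distrib]
        refine Finset.prod_congr rfl fun i0 _ => ?_
        rw [hent u i0 j0, mul_pow, mul_comm]
      rw [this]
      have hsign : (∏ j0 : Fin q, d (Fin.castLE hq j0) ^ (∑ i0, a i0 j0)) = -1 := by
        rw [Finset.prod_eq_single j]
        · simp only [hd, if_pos rfl]
          exact hoddj.neg_one_pow
        · intro j0 _ hne
          have : Fin.castLE hq j0 ≠ Fin.castLE hq j := by
            intro hc
            exact hne (Fin.castLE_injective hq hc)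
          simp [hd, this]
        · intro hmem; exact absurd (Finset.mem_univ j) hmem
      rw [hsign, neg_one_mul]
    have hint : In n μ a = - In n μ a := by
      unfold In
      conv_lhs => rw [← integral_mul_right_eq_self
        (fun u => ∏ i0 : Fin p, ∏ j0 : Fin q, entry u i0 j0 ^ a i0 j0) g]
      rw [show (fun u => ∏ i0 : Fin p, ∏ j0 : Fin q, entry (u * g) i0 j0 ^ a i0 j0)
          = fun u => - ∏ i0 : Fin p, ∏ j0 : Fin q, entry u i0 j0 ^ a i0 j0 from funext key]
      rw [integral_neg]
    unfold In at hint ⊢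
    linarith
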